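/- In the associative algebra generated by x, y, ξ, η subject to the (K;p,q)-plane relations — p·x·y = y·x, ξ² = 0, η² = 0, η·ξ + q·ξ·η = 0, (1−X)·x·ξ = ξ·x, (1−X)·x·η = ξ·y + (K/p)·Φ₁, (1−X)·y·ξ = η·x − (Kq/p)·Φ₁, (1−X)·y·η = η·y, where Φ₁ = η·x − p·ξ·y and 1−X = K(1 + q/p) − 1 — the element Φ₁ is nilpotent: Φ₁² = 0. -/

import Mathlib

noncomputable section

lemma key_plane_rel {F : Type*} [Field F] {A : Type*} [Ring A] [Algebra F A]
    (p q c u v : F) (hX : c ≠ 0) (huv : u * q = v)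
    (a b s t : A)
    (R1 : p • (a * b) = b * a)
    (R2 : s * s = 0) (R3 : t * t = 0)
    (R4 : t * s + q • (s * t) = 0)
    (R5 : c • (a * s) = s * a)
    (R6 : c • (a * t) = s * b + u • (t * a - p • (s * b)))
    (R7 : c • (b * s) = t * a - v • (t * a - p • (s * b)))
    (R8 : c • (b * t) = t * b) :
    (t * a - p • (s * b)) * (t * a - p • (s * b)) = 0 := by
  subst huv
  have h5 : a * s = c⁻¹ • (s * a) := (eq_inv_smul_iff₀ hX).mpr R5
  have h6 : a * t = c⁻¹ • (s * b + u • (t * a - p • (s * b))) :=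
    (eq_inv_smul_iff₀ hX).mpr R6
  have h7 : b * s = c⁻¹ • (t * a - (u * q) • (t * a - p • (s * b))) :=
    (eq_inv_smul_iff₀ hX).mpr R7
  have h8 : b * t = c⁻¹ • (t * b) := (eq_inv_smul_iff₀ hX).mpr R8
  have h4 : t * s = (-q) • (s * t) := by
    rw [neg_smul]; exact eq_neg_of_add_eq_zero_left R4
  have h1 : b * a = p • (a * b) := R1.symm
  have h5' : ∀ z : A, a * (s * z) = c⁻¹ • ((s * a) * z) := fun z => by
    rw [← mul_assoc, h5, smul_mul_assoc]
  have h6' : ∀ z : A, a * (t * z) = c⁻¹ • ((s * b + u • (t * a - p • (s * b))) * z) :=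
    fun z => by rw [← mul_assoc, h6, smul_mul_assoc]
  have h7' : ∀ z : A, b * (s * z) = c⁻¹ • ((t * a - (u * q) • (t * a - p • (s * b))) * z) :=
    fun z => by rw [← mul_assoc, h7, smul_mul_assoc]
  have h8' : ∀ z : A, b * (t * z) = c⁻¹ • ((t * b) * z) := fun z => by
    rw [← mul_assoc, h8, smul_mul_assoc]
  have h4' : ∀ z : A, t * (s * z) = (-q) • (s * (t * z)) := fun z => by
    rw [← mul_assoc, h4, smul_mul_assoc, mul_assoc]
  have h1' : ∀ z : A, b * (a * z) = p • (a * (b * z)) := fun z => by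
    rw [← mul_assoc, h1, smul_mul_assoc, mul_assoc]
  have h2' : ∀ z : A, s * (s * z) = 0 := fun z => by rw [← mul_assoc, R2, zero_mul]
  have h3' : ∀ z : A, t * (t * z) = 0 := fun z => by rw [← mul_assoc, R3, zero_mul]
  simp only [mul_sub, sub_mul, mul_add, add_mul, smul_mul_assoc, mul_smul_comm,
    smul_smul, mul_assoc, h6', h5', h7', h8', h4', h3', h2', h1', h6, h5, h7, h8, h4, h1,
    smul_add, smul_sub, mul_zero, zero_mul, smul_zero, sub_zero, add_zero, zero_add,
    zero_sub, neg_zero]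
  match_scalars <;> ring

/-- Generators: `0 = x`, `1 = y`, `2 = ξ`, `3 = η`. -/
abbrev FA (F : Type*) [Field F] := FreeAlgebra F (Fin 4)

/-- The defining relations of the `(K;p,q)`-deformed plane, with
`1 - X = K(1 + q/p) - 1`. -/
inductive PlaneRel (F : Type*) [Field F] (p q K : F) : FA F → FA F → Prop
  | xy : PlaneRel F p q K
      (algebraMap F (FA F) p * (FreeAlgebra.ι F 0 * FreeAlgebra.ι F 1))
      (FreeAlgebra.ι F 1 * FreeAlgebra.ι F 0)
  | xixi : PlaneRel F p q K (FreeAlgebra.ι F 2 * FreeAlgebra.ι F 2) 0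
  | etaeta : PlaneRel F p q K (FreeAlgebra.ι F 3 * FreeAlgebra.ι F 3) 0
  | etaxi : PlaneRel F p q K
      (FreeAlgebra.ι F 3 * FreeAlgebra.ι F 2 +
        algebraMap F (FA F) q * (FreeAlgebra.ι F 2 * FreeAlgebra.ι F 3)) 0
  | xxi : PlaneRel F p q K
      (algebraMap F (FA F) (K * (1 + q / p) - 1) *
        (FreeAlgebra.ι F 0 * FreeAlgebra.ι F 2))
      (FreeAlgebra.ι F 2 * FreeAlgebra.ι F 0)
  | xeta : PlaneRel F p q K
      (algebraMap F (FA F) (K * (1 + q / p) - 1) *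
        (FreeAlgebra.ι F 0 * FreeAlgebra.ι F 3))
      (FreeAlgebra.ι F 2 * FreeAlgebra.ι F 1 +
        algebraMap F (FA F) (K / p) *
          (FreeAlgebra.ι F 3 * FreeAlgebra.ι F 0 -
            algebraMap F (FA F) p * (FreeAlgebra.ι F 2 * FreeAlgebra.ι F 1)))
  | yxi : PlaneRel F p q K
      (algebraMap F (FA F) (K * (1 + q / p) - 1) *
        (FreeAlgebra.ι F 1 * FreeAlgebra.ι F 2))
      (FreeAlgebra.ι F 3 * FreeAlgebra.ι F 0 -
        algebraMap F (FA F) (K * q / p) *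
          (FreeAlgebra.ι F 3 * FreeAlgebra.ι F 0 -
            algebraMap F (FA F) p * (FreeAlgebra.ι F 2 * FreeAlgebra.ι F 1)))
  | yeta : PlaneRel F p q K
      (algebraMap F (FA F) (K * (1 + q / p) - 1) *
        (FreeAlgebra.ι F 1 * FreeAlgebra.ι F 3))
      (FreeAlgebra.ι F 3 * FreeAlgebra.ι F 1)

theorem stmt16 {F : Type*} [Field F] (p q K : F) (hp : p ≠ 0)
    (hX : K * (1 + q / p) - 1 ≠ 0) :
    let Phi1 : RingQuot (PlaneRel F p q K) :=
      RingQuot.mkRingHom (PlaneRel F p q K)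
        (FreeAlgebra.ι F 3 * FreeAlgebra.ι F 0 -
          algebraMap F (FA F) p * (FreeAlgebra.ι F 2 * FreeAlgebra.ι F 1))
    Phi1 * Phi1 = 0 := by
  intro Phi1
  have hcoe : RingQuot.mkRingHom (PlaneRel F p q K)
      = (RingQuot.mkAlgHom F (PlaneRel F p q K) : FA F →+* RingQuot (PlaneRel F p q K)) :=
    (RingQuot.mkAlgHom_coe F _).symm
  set ψ := RingQuot.mkAlgHom F (PlaneRel F p q K) with hψ
  set a := ψ (FreeAlgebra.ι F 0)
  set b := ψ (FreeAlgebra.ι F 1)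
  set s := ψ (FreeAlgebra.ι F 2)
  set t := ψ (FreeAlgebra.ι F 3)
  have hPhi : Phi1 = t * a - p • (s * b) := by
    show RingQuot.mkRingHom (PlaneRel F p q K) _ = _
    rw [hcoe]
    simp [map_sub, map_mul, AlgHom.commutes, ← Algebra.smul_def]
    rfl
  obtain ⟨c0, hc0⟩ : ∃ c0, K * (1 + q / p) - 1 = c0 := ⟨_, rfl⟩
  obtain ⟨u0, hu0⟩ : ∃ u0, K / p = u0 := ⟨_, rfl⟩
  obtain ⟨v0, hv0⟩ : ∃ v0, K * q / p = v0 := ⟨_, rfl⟩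
  have r1 := RingQuot.mkAlgHom_rel F (@PlaneRel.xy F _ p q K)
  have r2 := RingQuot.mkAlgHom_rel F (@PlaneRel.xixi F _ p q K)
  have r3 := RingQuot.mkAlgHom_rel F (@PlaneRel.etaeta F _ p q K)
  have r4 := RingQuot.mkAlgHom_rel F (@PlaneRel.etaxi F _ p q K)
  have r5 := RingQuot.mkAlgHom_rel F (@PlaneRel.xxi F _ p q K)
  have r6 := RingQuot.mkAlgHom_rel F (@PlaneRel.xeta F _ p q K)
  have r7 := RingQuot.mkAlgHom_rel F (@PlaneRel.yxi F _ p q K)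
  have r8 := RingQuot.mkAlgHom_rel F (@PlaneRel.yeta F _ p q K)
  rw [hc0] at r5 r6 r7 r8 hX
  rw [hu0] at r6
  rw [hv0] at r7
  simp only [map_smul, map_mul, map_add, map_sub, map_zero, AlgHom.commutes,
    ← Algebra.smul_def] at r1 r2 r3 r4 r5 r6 r7 r8
  rw [hPhi]
  exact key_plane_rel p q c0 u0 v0 hX (by rw [← hu0, ← hv0]; ring) a b s t
    r1 r2 r3 r4 r5 r6 r7 r8
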